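/- Let I ⊆ ℝⁿ be a measurable set with Lebesgue measure satisfying 0 < μ(I) < ∞, and let g : ℝⁿ → ℝ be measurable, integrable over I with ∫_I g dμ = 0, and such that exp ∘ g is integrable over I. Set h(x) = exp(g(x)) / ∫_I exp(g) dμ. Then h is a strictly positive probability density on I with integrable logarithm, and clr(h)(x) = g(x) for every x ∈ I; that is, the centred log-ratio transform is a bijection onto the functions on I with zero integral. -/

import Mathlib

open MeasureTheory

/-- The centred log-ratio transform of a positive density `f` on `I`. -/
noncomputable def clr {n : ℕ} (I : Set (Fin n → ℝ)) (f : (Fin n → ℝ) → ℝ) :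
    (Fin n → ℝ) → ℝ :=
  fun x => Real.log (f x) - ((volume I).toReal)⁻¹ * ∫ y in I, Real.log (f y)

/-- the inverse centred log-ratio transform of a zero-integral
function `g` is a strictly positive probability density on `I` with integrable
logarithm, and its clr transform is `g` on `I` (so clr is onto the zero-integral
functions, with inverse `clr⁻¹`). -/
theorem clr_inv_is_density_and_section {n : ℕ} (I : Set (Fin n → ℝ))
    (hI : MeasurableSet I) (h0 : 0 < volume I) (h1 : volume I < ⊤)
    (g : (Fin n → ℝ) → ℝ) (hmeas : Measurable g)
    (hint : IntegrableOn g I) (hzero : (∫ x in I, g x) = 0)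
    (hexp : IntegrableOn (fun x => Real.exp (g x)) I)
    (h : (Fin n → ℝ) → ℝ)
    (hdef : h = fun x => Real.exp (g x) / ∫ y in I, Real.exp (g y)) :
    (∀ x ∈ I, 0 < h x) ∧ IntegrableOn h I ∧ (∫ x in I, h x) = 1 ∧
      IntegrableOn (fun x => Real.log (h x)) I ∧ (∀ x ∈ I, clr I h x = g x) := by
  set C := ∫ y in I, Real.exp (g y) with hC
  have hCpos : 0 < C := by
    rw [hC, setIntegral_pos_iff_support_of_nonneg_ae
      (Filter.Eventually.of_forall fun x => (Real.exp_pos _).le) hexp]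
    have : Function.support (fun x => Real.exp (g x)) = Set.univ := by
      ext x; simp [Function.support, Real.exp_ne_zero]
    rwa [this, Set.univ_inter]
  have hCne : C ≠ 0 := ne_of_gt hCpos
  have hμ : (volume I).toReal ≠ 0 := by
    simp [ENNReal.toReal_ne_zero, h0.ne', h1.ne]
  have hlog : ∀ x, Real.log (h x) = g x - Real.log C := by
    intro x
    rw [hdef]
    simp only
    rw [Real.log_div (Real.exp_ne_zero _) hCne, Real.log_exp]
  refine ⟨?_, ?_, ?_, ?_, ?_⟩
  · intro x hx
    rw [hdef]
    exact div_pos (Real.exp_pos _) hCpos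
  · rw [hdef]
    exact hexp.div_const _
  · rw [hdef]
    simp only
    rw [integral_div, ← hC, div_self hCne]
  · have : (fun x => Real.log (h x)) = fun x => g x - Real.log C := funext hlog
    rw [this]
    exact hint.sub (integrableOn_const h1.ne)
  · intro x hx
    have hIntlog : (∫ y in I, Real.log (h y)) = -(volume I).toReal * Real.log C := by
      have : (∫ y in I, Real.log (h y)) = ∫ y in I, (g y - Real.log C) := by
        exact integral_congr_ae (Filter.Eventually.of_forall fun y => hlog y)
      rw [this, integral_sub hint (integrableOn_const h1.ne), hzero,
        setIntegral_const]
      simp [smul_eq_mul, Measure.real]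
    rw [clr, hlog x, hIntlog]
    field_simp
    ring
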